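/- arXiv:1212.1803 — 3 statements merged into one kernel-verified Lean document; each statement's English description precedes it below -/
import Mathlib

section
/- A nonconstant affine map ℝ^d → ℝ^n cannot map a point lying in the interior of the convex hull of a finite set S ⊂ ℝ^d onto a sphere together with S; more precisely, if x lies in the interior of the convex hull of S and f is an affine map with f(S ∪ {x}) contained in a sphere of ℝ^n, then f is constant. -/
/-- A nonconstant affine map `ℝ^d → ℝ^n` cannot map a point lying in the interior
of the convex hull of a finite set `S ⊂ ℝ^d` onto a sphere together with `S`:
if `x ∈ interior (convexHull S)` and `f` is affine with `f '' (S ∪ {x})` contained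
in a sphere of `ℝ^n`, then `f` is constant. -/
theorem stmt4 (d n : ℕ) (S : Set (EuclideanSpace ℝ (Fin d))) (hS : S.Finite)
    (x : EuclideanSpace ℝ (Fin d)) (hx : x ∈ interior (convexHull ℝ S))
    (f : EuclideanSpace ℝ (Fin d) →ᵃ[ℝ] EuclideanSpace ℝ (Fin n))
    (hsphere : ∃ (c : EuclideanSpace ℝ (Fin n)) (r : ℝ), 0 < r ∧
      f '' (S ∪ {x}) ⊆ Metric.sphere c r) :
    ∀ y z, f y = f z := by
  obtain ⟨c, r, hr, hsub⟩ := hsphere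
  set A := f.linear with hAdef
  -- the function g y = ‖f y - c‖ ^ 2 is convex
  have hg : ConvexOn ℝ Set.univ (fun y => ‖f y - c‖ ^ 2) := by
    refine ⟨convex_univ, fun u _ w _ a b ha hb hab => ?_⟩
    set p := f u - c with hp
    set q := f w - c with hq
    have hc : a • c + b • c = c := Convex.combo_self hab c
    have hcomb : f (a • u + b • w) - c = a • p + b • q := by
      rw [Convex.combo_affine_apply hab, hp, hq, smul_sub, smul_sub]
      nth_rewrite 1 [← hc]
      abel
    have hn : ‖f (a • u + b • w) - c‖ ≤ a * ‖p‖ + b * ‖q‖ := by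
      rw [hcomb]
      calc ‖a • p + b • q‖ ≤ ‖a • p‖ + ‖b • q‖ := norm_add_le _ _
        _ = a * ‖p‖ + b * ‖q‖ := by
            rw [norm_smul, norm_smul, Real.norm_eq_abs, Real.norm_eq_abs,
              abs_of_nonneg ha, abs_of_nonneg hb]
    have hsq : ‖f (a • u + b • w) - c‖ ^ 2 ≤ (a * ‖p‖ + b * ‖q‖) ^ 2 :=
      pow_le_pow_left₀ (norm_nonneg _) hn 2
    have key : (a * ‖p‖ + b * ‖q‖) ^ 2 ≤ a * ‖p‖ ^ 2 + b * ‖q‖ ^ 2 := by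
      nlinarith [sq_nonneg (‖p‖ - ‖q‖), mul_nonneg ha hb]
    simp only [smul_eq_mul]
    linarith
  -- g equals r^2 on S ∪ {x}
  have hval : ∀ p ∈ S ∪ {x}, ‖f p - c‖ ^ 2 = r ^ 2 := by
    intro p hp
    have := hsub ⟨p, hp, rfl⟩
    rw [Metric.mem_sphere, dist_eq_norm] at this
    rw [this]
  have hxval : ‖f x - c‖ ^ 2 = r ^ 2 := hval x (Or.inr rfl)
  -- g ≤ r^2 on convexHull S
  have hle : ∀ p ∈ convexHull ℝ S, ‖f p - c‖ ^ 2 ≤ r ^ 2 := by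
    intro p hp
    obtain ⟨s, hs, hsle⟩ :=
      hg.exists_ge_of_mem_convexHull (Set.subset_univ S) hp
    calc ‖f p - c‖ ^ 2 ≤ ‖f s - c‖ ^ 2 := hsle
      _ = r ^ 2 := hval s (Or.inl hs)
  -- ball around x inside convexHull S
  obtain ⟨ε, hε, hball⟩ := Metric.isOpen_iff.1 isOpen_interior x hx
  have hball' : Metric.ball x ε ⊆ convexHull ℝ S :=
    hball.trans interior_subset
  -- key: A v = 0 for all v
  have hA : ∀ v, A v = 0 := by
    intro v
    have key : ∀ t : ℝ, x + t • v ∈ Metric.ball x ε →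
        t ^ 2 * ‖A v‖ ^ 2 + 2 * t * (inner ℝ (A v) (f x - c) : ℝ) ≤ 0 := by
      intro t ht
      have h1 : ‖f (x + t • v) - c‖ ^ 2 ≤ r ^ 2 := hle _ (hball' ht)
      have h2 : f (x + t • v) = t • A v + f x := by
        rw [add_comm x (t • v), ← vadd_eq_add, f.map_vadd, vadd_eq_add, map_smul]
      rw [h2] at h1
      have h3 : t • A v + f x - c = t • A v + (f x - c) := by abel
      rw [h3, norm_add_sq_real, real_inner_smul_left, norm_smul, hxval] at h1
      have h5 : ‖t‖ ^ 2 = t ^ 2 := by rw [Real.norm_eq_abs, sq_abs]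
      rw [mul_pow, h5] at h1
      linarith
    set t₀ : ℝ := ε / (2 * (‖v‖ + 1)) with ht₀def
    have hvpos : (0:ℝ) < ‖v‖ + 1 := by positivity
    have ht₀ : 0 < t₀ := by positivity
    have hmem : ∀ t : ℝ, |t| ≤ t₀ → x + t • v ∈ Metric.ball x ε := by
      intro t ht
      rw [Metric.mem_ball, dist_eq_norm]
      have : x + t • v - x = t • v := by abel
      rw [this, norm_smul]
      calc |t| * ‖v‖ ≤ t₀ * (‖v‖ + 1) := by
            apply mul_le_mul ht (by linarith) (norm_nonneg v) (le_of_lt ht₀)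
        _ = ε / 2 := by
            rw [ht₀def, div_mul_eq_mul_div, mul_comm (2:ℝ), ← div_div,
              mul_div_cancel_right₀ _ hvpos.ne']
        _ < ε := by linarith
    have k1 := key t₀ (hmem t₀ (by rw [abs_of_pos ht₀]))
    have k2 := key (-t₀) (hmem (-t₀) (by rw [abs_neg, abs_of_pos ht₀]))
    have hprod : t₀ ^ 2 * ‖A v‖ ^ 2 ≤ t₀ ^ 2 * 0 := by nlinarith [k1, k2]
    have hAv : ‖A v‖ ^ 2 ≤ 0 := le_of_mul_le_mul_left hprod (pow_pos ht₀ 2)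
    have h0 : ‖A v‖ ^ 2 = 0 := le_antisymm hAv (sq_nonneg _)
    exact norm_eq_zero.mp (pow_eq_zero_iff (two_ne_zero) |>.mp h0)
  intro y z
  have h := f.linearMap_vsub y z
  have h0 := hA (y - z)
  rw [vsub_eq_sub, vsub_eq_sub] at h
  have : f y - f z = 0 := by rw [← h]; exact h0
  exact sub_eq_zero.mp this
end

section
/- Let g_1, ..., g_{d+1} ∈ O(n). The set of α ∈ ℝ^d for which there exists b ∈ ℝ^n, not fixed by all g_k, with ∑_{k=1}^d α_k (g_k b − b) + b = g_{d+1} b, is either all of ℝ^d or is contained in the zero set of a nonzero polynomial in α_1, ..., α_d. -/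
set_option maxHeartbeats 1000000 in
open MvPolynomial RealInnerProductSpace in
/-- For `g₁, …, g_{d+1} ∈ O(n)`, the set of `α ∈ ℝ^d` for which there is a vector
`b`, not fixed by all the `g_k`, with `∑ α_k (g_k b − b) + b = g_{d+1} b`, is either
all of `ℝ^d` or is contained in the zero set of a nonzero polynomial in `α`. -/
theorem stmt8 (d n : ℕ)
    (g : Fin (d + 1) → (EuclideanSpace ℝ (Fin n) ≃ₗᵢ[ℝ] EuclideanSpace ℝ (Fin n))) :
    {α : EuclideanSpace ℝ (Fin d) |
        ∃ b : EuclideanSpace ℝ (Fin n), (∃ k : Fin (d + 1), g k b ≠ b) ∧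
          ∑ k : Fin d, α k • (g k.castSucc b - b) + b = g (Fin.last d) b} = Set.univ ∨
    ∃ p : MvPolynomial (Fin d) ℝ, p ≠ 0 ∧
      {α : EuclideanSpace ℝ (Fin d) |
        ∃ b : EuclideanSpace ℝ (Fin n), (∃ k : Fin (d + 1), g k b ≠ b) ∧
          ∑ k : Fin d, α k • (g k.castSucc b - b) + b = g (Fin.last d) b} ⊆
      {α : EuclideanSpace ℝ (Fin d) | MvPolynomial.eval (fun i => α i) p = 0} := by
  classical
  -- the linear map `M α`
  let M : EuclideanSpace ℝ (Fin d) → (EuclideanSpace ℝ (Fin n)) →ₗ[ℝ] (EuclideanSpace ℝ (Fin n)) := fun α =>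
    (∑ k : Fin d, α k • (((g k.castSucc).toLinearEquiv : (EuclideanSpace ℝ (Fin n)) →ₗ[ℝ] (EuclideanSpace ℝ (Fin n))) - LinearMap.id))
      + (LinearMap.id - ((g (Fin.last d)).toLinearEquiv : (EuclideanSpace ℝ (Fin n)) →ₗ[ℝ] (EuclideanSpace ℝ (Fin n))))
  have hM : ∀ α (b : (EuclideanSpace ℝ (Fin n))),
      M α b = ∑ k : Fin d, α k • (g k.castSucc b - b) + (b - g (Fin.last d) b) := by
    intro α b
    simp [M, LinearMap.sum_apply, smul_sub]
  have hM' : ∀ α (b : (EuclideanSpace ℝ (Fin n))),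
      (∑ k : Fin d, α k • (g k.castSucc b - b) + b = g (Fin.last d) b) ↔ M α b = 0 := by
    intro α b
    rw [hM, ← add_sub_assoc, sub_eq_zero]
  -- fixed subspace
  let F : Submodule ℝ (EuclideanSpace ℝ (Fin n)) :=
    { carrier := {b | ∀ k, g k b = b}
      add_mem' := fun ha hb => fun k => by simp [map_add, ha k, hb k]
      zero_mem' := fun k => by simp
      smul_mem' := fun c b hb => fun k => by simp [map_smul, hb k] }
  have hFmem : ∀ b : (EuclideanSpace ℝ (Fin n)), b ∈ F ↔ ∀ k, g k b = b := fun _ => Iff.rfl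
  have hMF : ∀ α (b : (EuclideanSpace ℝ (Fin n))), (∀ k, g k b = b) → M α b = 0 := by
    intro α b hb
    rw [hM]
    simp [hb _]
  set W : Submodule ℝ (EuclideanSpace ℝ (Fin n)) := Fᗮ with hW
  -- reduce to vectors in W
  have key1 : ∀ α : EuclideanSpace ℝ (Fin d),
      (∃ b : (EuclideanSpace ℝ (Fin n)), (∃ k, g k b ≠ b) ∧ M α b = 0) ↔ (∃ v : W, v ≠ 0 ∧ M α (v : (EuclideanSpace ℝ (Fin n))) = 0) := by
    intro α
    constructor
    · rintro ⟨b, ⟨k, hk⟩, hb⟩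
      refine ⟨⟨b - (F.orthogonalProjection b : (EuclideanSpace ℝ (Fin n))),
        Submodule.sub_starProjection_mem_orthogonal (K := F) b⟩, ?_, ?_⟩
      · intro h
        have h' : b = (F.orthogonalProjection b : (EuclideanSpace ℝ (Fin n))) := by
          have := congrArg (Subtype.val) h
          simpa [sub_eq_zero] using this
        exact hk (by rw [h']; exact (F.orthogonalProjection b).2 k)
      · show M α (b - (F.orthogonalProjection b : (EuclideanSpace ℝ (Fin n)))) = 0
        rw [map_sub, hb, hMF α _ (F.orthogonalProjection b).2]
        simp
    · rintro ⟨v, hv0, hv⟩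
      refine ⟨(v : (EuclideanSpace ℝ (Fin n))), ?_, hv⟩
      by_contra h
      push_neg at h
      have hvF : (v : (EuclideanSpace ℝ (Fin n))) ∈ F := h
      have : (v : (EuclideanSpace ℝ (Fin n))) = 0 := by
        have hvv := Submodule.inner_right_of_mem_orthogonal (K := F) hvF v.2
        exact inner_self_eq_zero.mp hvv
      exact hv0 (Subtype.ext this)
  -- adjoint-composed endomorphism on W
  let S : EuclideanSpace ℝ (Fin d) → (W →ₗ[ℝ] (EuclideanSpace ℝ (Fin n))) := fun α => (M α) ∘ₗ W.subtype
  let T : EuclideanSpace ℝ (Fin d) → (W →ₗ[ℝ] W) := fun α =>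
    (LinearMap.adjoint (S α)) ∘ₗ (S α)
  have hTker : ∀ α (v : W), T α v = 0 ↔ M α (v : (EuclideanSpace ℝ (Fin n))) = 0 := by
    intro α v
    constructor
    · intro h
      have h0 : LinearMap.adjoint (S α) (S α v) = 0 := h
      have h2 := LinearMap.adjoint_inner_left (S α) v (S α v)
      rw [h0, inner_zero_left] at h2
      have h3 : S α v = 0 := inner_self_eq_zero.mp h2.symm
      exact h3
    · intro h
      show LinearMap.adjoint (S α) (S α v) = 0
      have h0 : S α v = 0 := h
      rw [h0, map_zero]
  have key2 : ∀ α, (∃ v : W, v ≠ 0 ∧ M α (v : (EuclideanSpace ℝ (Fin n))) = 0) ↔ LinearMap.det (T α) = 0 := by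
    intro α
    have htfae := (LinearMap.hasEigenvalue_zero_tfae (T α)).out 3 5
    constructor
    · rintro ⟨v, hv0, hv⟩; exact htfae.mpr ⟨v, hv0, (hTker α v).2 hv⟩
    · intro h
      obtain ⟨v, hv0, hv⟩ := htfae.mp h
      exact ⟨v, hv0, (hTker α v).1 hv⟩
  -- orthonormal basis of W
  let m := Module.finrank ℝ W
  let e : OrthonormalBasis (Fin m) ℝ W := stdOrthonormalBasis ℝ W
  -- polynomial matrix
  let q : Fin m → Fin n → MvPolynomial (Fin d) ℝ := fun i t =>
    (∑ k : Fin d, C ((g k.castSucc (e i : (EuclideanSpace ℝ (Fin n))) - (e i : (EuclideanSpace ℝ (Fin n)))) t) * X k)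
      + C (((e i : (EuclideanSpace ℝ (Fin n))) - g (Fin.last d) (e i : (EuclideanSpace ℝ (Fin n)))) t)
  have hq : ∀ (α : EuclideanSpace ℝ (Fin d)) i t,
      MvPolynomial.eval (fun j => α j) (q i t) = M α (e i : (EuclideanSpace ℝ (Fin n))) t := by
    intro α i t
    rw [hM]
    simp only [q, map_add, map_sum, map_mul, eval_C, eval_X]
    let φ : (EuclideanSpace ℝ (Fin n)) →+ ℝ := AddMonoidHom.mk' (fun x : (EuclideanSpace ℝ (Fin n)) => x t) (fun a b => rfl)
    have hφ : ∀ x : (EuclideanSpace ℝ (Fin n)), φ x = x t := fun x => rfl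
    have : (∑ k : Fin d, α k • (g k.castSucc (e i : (EuclideanSpace ℝ (Fin n))) - (e i : (EuclideanSpace ℝ (Fin n))))
        + ((e i : (EuclideanSpace ℝ (Fin n))) - g (Fin.last d) (e i : (EuclideanSpace ℝ (Fin n))))) t
        = ∑ k : Fin d, α k * ((g k.castSucc (e i : (EuclideanSpace ℝ (Fin n))) - (e i : (EuclideanSpace ℝ (Fin n)))) t)
          + ((e i : (EuclideanSpace ℝ (Fin n))) - g (Fin.last d) (e i : (EuclideanSpace ℝ (Fin n)))) t := by
      have h1 : φ (∑ k : Fin d, α k • (g k.castSucc (e i : (EuclideanSpace ℝ (Fin n))) - (e i : (EuclideanSpace ℝ (Fin n))))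
          + ((e i : (EuclideanSpace ℝ (Fin n))) - g (Fin.last d) (e i : (EuclideanSpace ℝ (Fin n)))))
          = ∑ k : Fin d, α k * ((g k.castSucc (e i : (EuclideanSpace ℝ (Fin n))) - (e i : (EuclideanSpace ℝ (Fin n)))) t)
            + ((e i : (EuclideanSpace ℝ (Fin n))) - g (Fin.last d) (e i : (EuclideanSpace ℝ (Fin n)))) t := by
        rw [map_add, map_sum]
        rfl
      exact h1
    rw [this]
    congr 1
    exact Finset.sum_congr rfl fun k _ => mul_comm _ _
  let P : Matrix (Fin m) (Fin m) (MvPolynomial (Fin d) ℝ) :=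
    Matrix.of fun i j => ∑ t : Fin n, q i t * q j t
  -- the polynomial
  let p : MvPolynomial (Fin d) ℝ := P.det
  have keyp : ∀ α : EuclideanSpace ℝ (Fin d),
      MvPolynomial.eval (fun j => α j) p = LinearMap.det (T α) := by
    intro α
    have h1 : MvPolynomial.eval (fun j => α j) p
        = (P.map (MvPolynomial.eval (fun j => α j))).det :=
      RingHom.map_det (MvPolynomial.eval (fun j => α j)) P
    rw [h1]
    rw [← LinearMap.det_toMatrix e.toBasis (T α)]
    congr 1
    ext i j
    rw [Matrix.map_apply]
    show MvPolynomial.eval (fun j => α j) (∑ t : Fin n, q i t * q j t) = _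
    rw [map_sum]
    simp_rw [map_mul, hq]
    have h2 : (LinearMap.toMatrix e.toBasis e.toBasis (T α)) i j
        = (inner ℝ (S α (e i)) (S α (e j)) : ℝ) := by
      rw [LinearMap.toMatrix_apply]
      rw [OrthonormalBasis.coe_toBasis, OrthonormalBasis.coe_toBasis_repr_apply]
      rw [e.repr_apply_apply]
      show (inner ℝ (e i) (LinearMap.adjoint (S α) (S α (e j))) : ℝ) = _
      rw [LinearMap.adjoint_inner_right]
    have h3 : (inner ℝ (S α (e i)) (S α (e j)) : ℝ)
        = ∑ t : Fin n, (M α (e i : (EuclideanSpace ℝ (Fin n)))) t * (M α (e j : (EuclideanSpace ℝ (Fin n)))) t := by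
      show (inner ℝ (M α (e i : (EuclideanSpace ℝ (Fin n)))) (M α (e j : (EuclideanSpace ℝ (Fin n)))) : ℝ) = _
      rw [PiLp.inner_apply]
      simp only [RCLike.inner_apply, starRingEnd_apply, star_trivial]
      exact Finset.sum_congr rfl fun _ _ => mul_comm _ _
    rw [h2]
    exact h3.symm
  -- finish
  have main : ∀ α : EuclideanSpace ℝ (Fin d),
      (∃ b : (EuclideanSpace ℝ (Fin n)), (∃ k, g k b ≠ b) ∧
        ∑ k : Fin d, α k • (g k.castSucc b - b) + b = g (Fin.last d) b)
      ↔ MvPolynomial.eval (fun j => α j) p = 0 := by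
    intro α
    rw [keyp, ← key2, ← key1]
    constructor
    · rintro ⟨b, hb, h⟩; exact ⟨b, hb, (hM' α b).1 h⟩
    · rintro ⟨b, hb, h⟩; exact ⟨b, hb, (hM' α b).2 h⟩
  by_cases hp : p = 0
  · left
    ext α
    simp only [Set.mem_setOf_eq, Set.mem_univ, iff_true]
    exact (main α).2 (by rw [hp, map_zero])
  · right
    exact ⟨p, hp, fun α hα => (main α).1 hα⟩
end

section
/- Every set of d+1 affinely independent points in ℝ^d (a nondegenerate simplex) is subtransitive: it embeds isometrically into a transitive finite subset of some ℝ^n. -/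
/-- A finite set `T ⊆ ℝ^n` is transitive if some group of isometries of `ℝ^n`
preserving `T` acts transitively on `T`. -/
def IsTransitiveSet {n : ℕ} (T : Set (EuclideanSpace ℝ (Fin n))) : Prop :=
  T.Finite ∧ ∀ x ∈ T, ∀ y ∈ T,
    ∃ g : EuclideanSpace ℝ (Fin n) ≃ᵢ EuclideanSpace ℝ (Fin n), g '' T = T ∧ g x = y


open Real Finset
set_option maxHeartbeats 1000000
set_option linter.unusedSectionVars false
set_option linter.unusedVariables false
set_option linter.unusedTactic false


lemma qform_line {n : ℕ} (t c : Fin n → ℝ) (hc : ∑ i, c i = 0) :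
    ∑ i, ∑ j, c i * c j * (t i - t j)^2 = -2 * (∑ i, c i * t i)^2 := by
  have h : ∀ i j : Fin n, c i * c j * (t i - t j)^2
      = (c i * t i^2) * c j + c i * (c j * t j^2) - 2 * ((c i * t i) * (c j * t j)) := by
    intros; ring
  simp_rw [h, Finset.sum_sub_distrib, Finset.sum_add_distrib, ← Finset.mul_sum, ← Finset.sum_mul,
    hc]
  simp [← Finset.sum_mul, ← Finset.mul_sum, hc]
  ring

lemma qform_points {n : ℕ} {F : Type*} [NormedAddCommGroup F] [InnerProductSpace ℝ F]
    (p : Fin n → F) (c : Fin n → ℝ) (hc : ∑ i, c i = 0) :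
    ∑ i, ∑ j, c i * c j * (dist (p i) (p j))^2 = -2 * ‖∑ i, c i • p i‖^2 := by
  have h : ∀ i j : Fin n, c i * c j * (dist (p i) (p j))^2
      = (c i * ‖p i‖^2) * c j + c i * (c j * ‖p j‖^2)
        - 2 * (c i * c j * inner ℝ (p i) (p j)) := by
    intro i j
    rw [dist_eq_norm, norm_sub_sq_real]
    ring
  simp_rw [h, Finset.sum_sub_distrib, Finset.sum_add_distrib, ← Finset.mul_sum, ← Finset.sum_mul,
    hc]
  have h2 : ∑ i, ∑ j, c i * c j * inner ℝ (p i) (p j)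
      = (inner ℝ (∑ i, c i • p i) (∑ j, c j • p j) : ℝ) := by
    rw [sum_inner]
    refine Finset.sum_congr rfl fun i _ => ?_
    rw [inner_sum]
    refine Finset.sum_congr rfl fun j _ => ?_
    rw [real_inner_smul_left, real_inner_smul_right]
    ring
  rw [h2, real_inner_self_eq_norm_sq]
  ring

lemma norm_sq_euclidean {m : ℕ} (c : EuclideanSpace ℝ (Fin m)) :
    ‖c‖^2 = ∑ i, c i ^ 2 := by
  rw [EuclideanSpace.norm_eq, Real.sq_sqrt (by positivity)]
  simp [sq_abs]

lemma exists_delta {d : ℕ} (x : Fin (d+1) → EuclideanSpace ℝ (Fin d))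
    (hx : AffineIndependent ℝ x) :
    ∃ δ : ℝ, 0 < δ ∧ ∀ c : Fin (d+1) → ℝ, (∑ i, c i) = 0 →
      δ * (6 * (d+1) * ∑ i, (c i)^2) ≤ ‖∑ i, c i • x i‖^2 := by
  classical
  set A : EuclideanSpace ℝ (Fin (d+1)) →ₗ[ℝ] (EuclideanSpace ℝ (Fin d)) × ℝ :=
    { toFun := fun c => (∑ i, c i • x i, ∑ i, c i),
      map_add' := by
        intro a b
        have h1 : ∀ i, (a + b) i = a i + b i := fun i => rfl
        simp [h1, add_smul, Finset.sum_add_distrib, Prod.ext_iff]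
      map_smul' := by
        intro r a
        have h1 : ∀ i, (r • a) i = r * a i := fun i => rfl
        simp [h1, smul_smul, Finset.smul_sum, Finset.mul_sum, Prod.ext_iff] } with hA
  have hker : LinearMap.ker A = ⊥ := by
    rw [LinearMap.ker_eq_bot']
    intro c hc
    have h1 : (∑ i, c i • x i, ∑ i, c i) = ((0 : EuclideanSpace ℝ (Fin d)), (0:ℝ)) := hc
    rw [Prod.ext_iff] at h1
    obtain ⟨hc1, hc2⟩ := h1
    have hvs : (Finset.univ.weightedVSub x) c = 0 := by
      rw [Finset.weightedVSub_eq_weightedVSubOfPoint_of_sum_eq_zero _ _ _ hc2 0,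
        Finset.weightedVSubOfPoint_apply]
      simpa [vsub_eq_sub, sub_zero] using hc1
    have := (affineIndependent_iff_of_fintype ℝ x).mp hx c hc2 hvs
    ext i
    exact this i
  obtain ⟨K, hK0, hK⟩ := A.exists_antilipschitzWith hker
  refine ⟨1 / (6 * (d+1) * ((K:ℝ)^2 + 1)), by positivity, ?_⟩
  intro c hc
  let c' : EuclideanSpace ℝ (Fin (d+1)) := WithLp.toLp 2 c
  set S := ∑ i, (c i)^2 with hS
  have hS0 : 0 ≤ S := Finset.sum_nonneg fun i _ => sq_nonneg _
  have hnc : ‖c'‖ ≤ (K:ℝ) * ‖A c'‖ := by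
    have := hK.le_mul_dist c' 0
    simpa [dist_zero_right, map_zero] using this
  have hAc : ‖A c'‖ = ‖∑ i, c i • x i‖ := by
    have : A c' = (∑ i, c i • x i, (0:ℝ)) := by
      simp only [hA, c', LinearMap.coe_mk, AddHom.coe_mk, WithLp.ofLp_toLp, hc]
    rw [this, Prod.norm_def]
    simp
  have hcS : ‖c'‖^2 = S := norm_sq_euclidean c'
  have hsq : S ≤ (K:ℝ)^2 * ‖∑ i, c i • x i‖^2 := by
    rw [← hcS]
    have h0 : (0:ℝ) ≤ ‖c'‖ := norm_nonneg _
    have h1 : (0:ℝ) ≤ (K:ℝ) * ‖A c'‖ := le_trans h0 hnc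
    calc ‖c'‖^2 ≤ ((K:ℝ) * ‖A c'‖)^2 := by
          nlinarith [hnc]
      _ = (K:ℝ)^2 * ‖∑ i, c i • x i‖^2 := by rw [hAc]; ring
  have hKpos : (0:ℝ) < (K:ℝ)^2 + 1 := by positivity
  have hdpos : (0:ℝ) < 6 * ((d:ℝ)+1) := by positivity
  have heq : 1 / (6 * ((d:ℝ)+1) * ((K:ℝ)^2 + 1)) * (6 * ((d:ℝ)+1) * S) = S / ((K:ℝ)^2+1) := by
    field_simp
  rw [heq, div_le_iff₀ hKpos]
  nlinarith [sq_nonneg (‖∑ i, c i • x i‖)]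

lemma realize_negtype {m : ℕ} (D : Fin (m+1) → Fin (m+1) → ℝ)
    (hsym : ∀ i j, D i j = D j i) (hdiag : ∀ i, D i i = 0)
    (hneg : ∀ c : Fin (m+1) → ℝ, ∑ i, c i = 0 → ∑ i, ∑ j, c i * c j * D i j ≤ 0) :
    ∃ u : Fin (m+1) → Fin (m+1) → ℝ, ∀ i j, D i j = ∑ k, (u i k - u j k)^2 := by
  classical
  set G : Matrix (Fin (m+1)) (Fin (m+1)) ℝ :=
    Matrix.of (fun i j => (D i 0 + D j 0 - D i j)/2) with hG
  have hGapp : ∀ i j, G i j = (D i 0 + D j 0 - D i j)/2 := fun i j => rfl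
  have hherm : G.IsHermitian := by
    ext i j
    simp only [Matrix.conjTranspose_apply, hGapp, star_trivial]
    rw [hsym j i]
    ring
  have hpsd : G.PosSemidef := by
    refine Matrix.PosSemidef.of_dotProduct_mulVec_nonneg hherm ?_
    intro v
    have hsv : star v = v := by funext i; simp
    rw [hsv]
    set s := ∑ i, v i with hs
    set c : Fin (m+1) → ℝ := fun i => v i - s * (if i = 0 then 1 else 0) with hc
    have hcsum : ∑ i, c i = 0 := by
      simp only [hc, Finset.sum_sub_distrib, mul_ite, mul_one, mul_zero,
        Finset.sum_ite_eq' Finset.univ (0 : Fin (m+1))]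
      simp [hs]
    have key : ∑ i, ∑ j, c i * c j * D i j
        = (∑ i, ∑ j, v i * v j * D i j) - 2 * s * (∑ j, v j * D j 0) := by
      have e1 : ∀ i j, c i * c j * D i j
          = v i * v j * D i j - (if i = 0 then s * (v j * D i j) else 0)
            - (if j = 0 then s * (v i * D i j) else 0)
            + (if i = 0 then (if j = 0 then s^2 * D i j else 0) else 0) := by
        intro i j
        by_cases hi : i = 0 <;> by_cases hj : j = 0 <;> simp [hc, hi, hj] <;> ring
      simp_rw [e1, Finset.sum_add_distrib, Finset.sum_sub_distrib]
      have h2 : ∀ (F : Fin (m+1) → Fin (m+1) → ℝ),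
          ∑ i, ∑ j, (if i = 0 then F i j else 0) = ∑ j, F 0 j := by
        intro F
        rw [Finset.sum_eq_single (0 : Fin (m+1))]
        · simp
        · intro b _ hb; simp [hb]
        · intro h; exact absurd (Finset.mem_univ _) h
      have h3 : ∀ (F : Fin (m+1) → Fin (m+1) → ℝ),
          ∑ i, ∑ j, (if j = 0 then F i j else 0) = ∑ i, F i 0 := by
        intro F
        refine Finset.sum_congr rfl fun i _ => ?_
        rw [Finset.sum_eq_single (0 : Fin (m+1))]
        · simp
        · intro b _ hb; simp [hb]
        · intro h; exact absurd (Finset.mem_univ _) h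
      rw [h2, h3, h2 (fun i j => if j = 0 then s^2 * D i j else 0)]
      have h6 : ∑ j, (if j = (0:Fin (m+1)) then s^2 * D 0 j else 0) = s^2 * D 0 0 := by
        rw [Finset.sum_ite_eq' Finset.univ (0 : Fin (m+1))]
        simp
      rw [h6, hdiag 0, mul_zero]
      have h4 : ∑ j, s * (v j * D 0 j) = s * ∑ j, v j * D j 0 := by
        rw [Finset.mul_sum]
        exact Finset.sum_congr rfl fun j _ => by rw [hsym 0 j]
      have h5 : ∑ i, s * (v i * D i 0) = s * ∑ j, v j * D j 0 := by
        rw [Finset.mul_sum]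
      rw [h4, h5]
      ring
    have hGv : dotProduct v (G.mulVec v)
        = (∑ i, v i * D i 0) * s - (∑ i, ∑ j, v i * v j * D i j) / 2 := by
      have lhs : dotProduct v (G.mulVec v) = ∑ i, v i * (∑ j, G i j * v j) := rfl
      rw [lhs]
      simp_rw [Finset.mul_sum]
      have e2 : ∀ i j, v i * (G i j * v j)
          = (v i * D i 0) * v j / 2 + v i * (v j * D j 0) / 2 - (v i * v j * D i j) / 2 := by
        intro i j; rw [hGapp]; ring
      simp_rw [e2, Finset.sum_sub_distrib, Finset.sum_add_distrib]
      have hA : ∑ i, ∑ j, ((v i * D i 0) * v j / 2) = (∑ i, v i * D i 0) * s / 2 := by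
        have : ∀ i, ∑ j, ((v i * D i 0) * v j / 2) = (v i * D i 0) * s / 2 := by
          intro i
          rw [← Finset.sum_div, ← Finset.mul_sum, hs]
        simp_rw [this]
        rw [← Finset.sum_div, ← Finset.sum_mul]
      have hB : ∑ i, ∑ j, (v i * (v j * D j 0) / 2) = s * (∑ j, v j * D j 0) / 2 := by
        have : ∀ i, ∑ j, (v i * (v j * D j 0) / 2) = v i * (∑ j, v j * D j 0) / 2 := by
          intro i
          rw [← Finset.sum_div, ← Finset.mul_sum]
        simp_rw [this]
        rw [← Finset.sum_div, ← Finset.sum_mul, hs]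
      have hC : ∑ i, ∑ j, (v i * v j * D i j / 2) = (∑ i, ∑ j, v i * v j * D i j) / 2 := by
        simp_rw [← Finset.sum_div]
      rw [hA, hB, hC]
      ring
    have hcn := hneg c hcsum
    rw [key] at hcn
    rw [hGv]
    linarith [hcn]
  open scoped MatrixOrder in set S := CFC.sqrt G with hSdef
  have hSS : S * S = G := open scoped MatrixOrder in CFC.sqrt_mul_sqrt_self G hpsd.nonneg
  have hSsym : ∀ i j, S i j = S j i := by
    intro i j
    have := (open scoped MatrixOrder in Matrix.nonneg_iff_posSemidef.mp (CFC.sqrt_nonneg G)).1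
    have h2 := congrFun (congrFun this i) j
    simpa [Matrix.conjTranspose_apply, star_trivial] using h2.symm
  refine ⟨fun i k => S i k, ?_⟩
  intro i j
  have hdot : ∀ a b, ∑ k, S a k * S b k = G a b := by
    intro a b
    rw [← hSS, Matrix.mul_apply]
    exact Finset.sum_congr rfl fun k _ => by rw [hSsym k b]
  have expand : ∑ k, (S i k - S j k)^2
      = (∑ k, S i k * S i k) + (∑ k, S j k * S j k) - 2 * ∑ k, S i k * S j k := by
    have h7 : ∀ k, (S i k - S j k)^2
        = S i k * S i k + S j k * S j k - 2 * (S i k * S j k) := fun k => by ring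
    simp_rw [h7, Finset.sum_sub_distrib, Finset.sum_add_distrib, ← Finset.mul_sum]
  rw [expand, hdot, hdot, hdot, hGapp, hGapp, hGapp, hdiag i, hdiag j]
  ring

lemma approx_line {n : ℕ} (t : Fin n → ℝ) {ε : ℝ} (hε : 0 < ε) :
    ∃ (Q : ℕ) (a : Fin n → ℤ) (w : ℝ), 0 < Q ∧ 0 ≤ w ∧
      ∀ i j, |w * (2 - 2 * Real.cos (2 * π * ((a i : ℝ) - (a j : ℝ)) / Q))
        - (t i - t j)^2| ≤ ε := by
  classical
  set B : ℝ := 1 + ∑ i, |t i| with hBdef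
  have hsum0 : (0:ℝ) ≤ ∑ i, |t i| := Finset.sum_nonneg fun i _ => abs_nonneg _
  have hB1 : (1:ℝ) ≤ B := by rw [hBdef]; linarith
  have hB : ∀ i, |t i| ≤ B := by
    intro i
    have h := Finset.single_le_sum (f := fun i => |t i|) (fun i _ => abs_nonneg _)
      (Finset.mem_univ i)
    rw [hBdef]; linarith
  obtain ⟨S, hSgt⟩ := exists_nat_gt (max 1 ((4*B+2)*2/ε))
  have hS1 : (1:ℝ) ≤ (S:ℝ) := le_of_lt (lt_of_le_of_lt (le_max_left _ _) hSgt)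
  have hS0 : (0:ℝ) < S := by linarith
  have hSε : (4*B+2)/(S:ℝ) ≤ ε/2 := by
    have h2 : (4*B+2)*2/ε ≤ (S:ℝ) := le_of_lt (lt_of_le_of_lt (le_max_right _ _) hSgt)
    rw [div_le_iff₀ hε] at h2
    rw [div_le_div_iff₀ hS0 (by norm_num : (0:ℝ) < 2)]
    linarith
  set a : Fin n → ℤ := fun i => round ((S:ℝ) * t i) with ha
  have hr : ∀ i, |((a i : ℝ)) - S * t i| ≤ 1/2 := by
    intro i
    rw [ha, abs_sub_comm]
    exact abs_sub_round _
  obtain ⟨Q, hQgt⟩ := exists_nat_gt (max 1 (8*(S:ℝ)*(2*B+1)^2*(1+1/ε)))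
  have hQ1 : (1:ℝ) ≤ (Q:ℝ) := le_of_lt (lt_of_le_of_lt (le_max_left _ _) hQgt)
  have hQ0 : (0:ℝ) < Q := by linarith
  have hQbig : 8*(S:ℝ)*(2*B+1)^2*(1+1/ε) ≤ (Q:ℝ) :=
    le_of_lt (lt_of_le_of_lt (le_max_right _ _) hQgt)
  have hQnat : 0 < Q := by exact_mod_cast hQ0
  have hεinv : (0:ℝ) < 1/ε := by positivity
  refine ⟨Q, a, (Q:ℝ)^2/(4*π^2*(S:ℝ)^2), hQnat, by positivity, ?_⟩
  intro i j
  set w : ℝ := (Q:ℝ)^2/(4*π^2*(S:ℝ)^2) with hw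
  have hw0 : 0 ≤ w := by positivity
  set Δ : ℝ := (a i : ℝ) - (a j : ℝ) with hΔdef
  set v : ℝ := t i - t j with hv
  set u : ℝ := Δ / S with hu
  set x : ℝ := 2 * π * Δ / Q with hx
  have hvB : |v| ≤ 2*B := by
    rw [hv]
    calc |t i - t j| ≤ |t i| + |t j| := abs_sub _ _
      _ ≤ 2*B := by have := hB i; have := hB j; linarith
  have huv : |u - v| ≤ 1/S := by
    have h1 : |Δ - S * v| ≤ 1 := by
      have h2 := hr i; have h3 := hr j
      have he : Δ - S * v = ((a i : ℝ) - S * t i) - ((a j : ℝ) - S * t j) := by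
        rw [hΔdef, hv]; ring
      rw [he]
      calc |((a i : ℝ) - S * t i) - ((a j : ℝ) - S * t j)|
          ≤ |((a i : ℝ) - S * t i)| + |((a j : ℝ) - S * t j)| := abs_sub _ _
        _ ≤ 1 := by linarith
    have he2 : u - v = (Δ - S * v)/S := by rw [hu]; field_simp
    rw [he2, abs_div, abs_of_pos hS0]
    exact div_le_div_of_nonneg_right h1 hS0.le
  have hSinv : 1/(S:ℝ) ≤ 1 := by rw [div_le_one hS0]; exact hS1
  have huB : |u| ≤ 2*B+1 := by
    calc |u| = |v + (u - v)| := by ring_nf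
      _ ≤ |v| + |u - v| := abs_add_le _ _
      _ ≤ 2*B + 1 := by linarith
  have h1 : |u^2 - v^2| ≤ ε/2 := by
    have he : u^2 - v^2 = (u - v)*(u + v) := by ring
    rw [he, abs_mul]
    have h2 : |u + v| ≤ 4*B+2 := by
      calc |u + v| ≤ |u| + |v| := abs_add_le _ _
        _ ≤ 4*B+2 := by linarith
    calc |u - v| * |u + v| ≤ (1/S) * (4*B+2) :=
          mul_le_mul huv h2 (abs_nonneg _) (by positivity)
      _ = (4*B+2)/S := by ring
      _ ≤ ε/2 := hSε
  have hΔb : |Δ| ≤ S*(2*B+1) := by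
    have : Δ = u * S := by rw [hu]; field_simp
    rw [this, abs_mul, abs_of_pos hS0]
    have := mul_le_mul_of_nonneg_right huB hS0.le
    linarith
  have hxval : |x| = 2*π*|Δ|/Q := by
    rw [hx, abs_div, abs_mul, abs_of_nonneg (by positivity : (0:ℝ) ≤ 2*π), abs_of_pos hQ0]
  have hx2 : |x| ≤ 8*(S*(2*B+1))/Q := by
    have c1 : 2*π ≤ 8 := by linarith [pi_le_four]
    have hnum : 2*π*|Δ| ≤ 8*(S*(2*B+1)) := by
      have c2 : 2*π*|Δ| ≤ 8*|Δ| := mul_le_mul_of_nonneg_right c1 (abs_nonneg Δ)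
      linarith [hΔb]
    rw [hxval]
    exact div_le_div_of_nonneg_right hnum hQ0.le
  have he1 : (1:ℝ) ≤ 2*B+1 := by linarith
  have he2 : (1:ℝ) ≤ 1+1/ε := by linarith
  have hden : (1:ℝ) ≤ (2*B+1)*(1+1/ε) := by
    have := mul_le_mul he1 he2 (by norm_num) (by linarith)
    linarith
  have hx3 : |x| ≤ 1/((2*B+1)*(1+1/ε)) := by
    refine hx2.trans ?_
    rw [div_le_div_iff₀ hQ0 (by have := mul_le_mul he1 he2 (by norm_num) (by linarith); linarith : (0:ℝ) < (2*B+1)*(1+1/ε))]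
    have e3 : 8*(S:ℝ)*(2*B+1)^2*(1+1/ε) = 8*((S:ℝ)*(2*B+1)) * ((2*B+1)*(1+1/ε)) := by ring
    linarith [hQbig]
  have hx1 : |x| ≤ 1 := by
    refine hx3.trans ?_
    rw [div_le_one (by have := mul_le_mul he1 he2 (by norm_num) (by linarith); linarith : (0:ℝ) < (2*B+1)*(1+1/ε))]
    exact hden
  have hwx : w * x^2 = u^2 := by
    rw [hw, hx, hu]
    have hπ : π ≠ 0 := ne_of_gt pi_pos
    field_simp
    ring
  have hcos := Real.cos_bound hx1
  have hterm1 : |w * (2 - 2*Real.cos x) - u^2| ≤ ε/2 := by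
    have he : w * (2 - 2*Real.cos x) - u^2
        = w * (-2) * (Real.cos x - (1 - x^2/2)) := by rw [← hwx]; ring
    rw [he, abs_mul, abs_mul]
    have hx4 : |x|^4 = (x^2)^2 := by
      rw [← sq_abs x]; ring
    have hb1 : |w| * |(-2:ℝ)| * |Real.cos x - (1 - x^2/2)| ≤ w * 2 * (|x|^4 * (5/96)) := by
      rw [abs_of_nonneg hw0]
      have : |(-2:ℝ)| = 2 := by norm_num
      rw [this]
      apply mul_le_mul_of_nonneg_left hcos (by positivity)
    refine (le_trans hb1 ?_)
    rw [hx4]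
    have hx2sq : x^2 ≤ (1/((2*B+1)*(1+1/ε)))^2 := by
      rw [← sq_abs x]
      exact pow_le_pow_left₀ (abs_nonneg x) hx3 2
    have hu2 : u^2 ≤ (2*B+1)^2 := by
      rw [← sq_abs u]
      exact pow_le_pow_left₀ (abs_nonneg u) huB 2
    have hwxx : w * 2 * ((x^2)^2 * (5/96)) ≤ u^2 * x^2 / 2 := by
      have : w * 2 * ((x^2)^2*(5/96)) = (w * x^2) * (x^2 * (10/96)) := by ring
      rw [this, hwx]
      have hA : (0:ℝ) ≤ u^2*x^2 := by positivity
      linarith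
    refine hwxx.trans ?_
    have hpos : (0:ℝ) < (2*B+1)*(1+1/ε) := by
      have := mul_le_mul he1 he2 (by norm_num) (by linarith)
      linarith
    have hfin : u^2 * x^2 / 2 ≤ (2*B+1)^2 * (1/((2*B+1)*(1+1/ε)))^2 / 2 := by
      have := mul_le_mul hu2 hx2sq (sq_nonneg x) (by positivity)
      linarith
    refine hfin.trans ?_
    have heq : (2*B+1)^2 * (1/((2*B+1)*(1+1/ε)))^2 / 2 = 1/(2*(1+1/ε)^2) := by
      field_simp
    rw [heq]
    rw [div_le_div_iff₀ (by positivity) (by norm_num : (0:ℝ) < 2)]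
    have he4 : ε * (2*(1+1/ε)^2) = 2*(ε + 2 + 1/ε) := by field_simp; ring
    linarith [hεinv, hε, he4]
  calc |w * (2 - 2 * Real.cos x) - v^2|
      = |(w * (2 - 2*Real.cos x) - u^2) + (u^2 - v^2)| := by
        congr 1
        ring
    _ ≤ |w * (2 - 2*Real.cos x) - u^2| + |u^2 - v^2| := abs_add_le _ _
    _ ≤ ε/2 + ε/2 := add_le_add hterm1 h1
    _ = ε := by ring


section rot
variable {ι : Type*} [Fintype ι]

noncomputable def ptZ (Q : ι → ℕ) (w : ι → ℝ) (z : ι → ℤ) : EuclideanSpace ℝ (ι × Fin 2) :=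
  WithLp.toLp 2 fun p => Real.sqrt (w p.1) * (if p.2 = 0 then Real.cos (2*π*(z p.1)/(Q p.1))
    else Real.sin (2*π*(z p.1)/(Q p.1)))

noncomputable def rotF (α : ι → ℝ) (f : EuclideanSpace ℝ (ι × Fin 2)) :
    EuclideanSpace ℝ (ι × Fin 2) :=
  WithLp.toLp 2 fun p => if p.2 = 0 then Real.cos (α p.1) * f (p.1, 0) - Real.sin (α p.1) * f (p.1, 1)
    else Real.sin (α p.1) * f (p.1, 0) + Real.cos (α p.1) * f (p.1, 1)

lemma rot_rot (α β : ι → ℝ) (f : EuclideanSpace ℝ (ι × Fin 2)) :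
    rotF α (rotF β f) = rotF (fun b => α b + β b) f := by
  ext p
  rcases p with ⟨b, t⟩
  fin_cases t <;>
    simp [rotF, Real.cos_add, Real.sin_add] <;> ring

lemma rot_zero (f : EuclideanSpace ℝ (ι × Fin 2)) : rotF (fun _ => 0) f = f := by
  ext p
  rcases p with ⟨b, t⟩
  fin_cases t <;> simp [rotF]

lemma rot_isometry (α : ι → ℝ) (f g : EuclideanSpace ℝ (ι × Fin 2)) :
    dist (rotF α f) (rotF α g) = dist f g := by
  rw [EuclideanSpace.dist_eq, EuclideanSpace.dist_eq]
  congr 1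
  rw [Fintype.sum_prod_type, Fintype.sum_prod_type]
  refine Finset.sum_congr rfl fun b _ => ?_
  rw [Fin.sum_univ_two, Fin.sum_univ_two]
  simp only [rotF, PiLp.toLp_apply, Real.dist_eq, sq_abs]
  norm_num
  linear_combination
    (((f (b,0) - g (b,0))^2 + (f (b,1) - g (b,1))^2)) * (Real.sin_sq_add_cos_sq (α b))

noncomputable def rotE (α : ι → ℝ) :
    EuclideanSpace ℝ (ι × Fin 2) ≃ᵢ EuclideanSpace ℝ (ι × Fin 2) :=
  IsometryEquiv.mk
    { toFun := rotF α
      invFun := rotF (fun b => -(α b))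
      left_inv := fun f => by
        rw [rot_rot]
        have : (fun b => -(α b) + α b) = fun _ : ι => (0:ℝ) := by funext b; ring
        rw [this, rot_zero]
      right_inv := fun f => by
        rw [rot_rot]
        have : (fun b => α b + -(α b)) = fun _ : ι => (0:ℝ) := by funext b; ring
        rw [this, rot_zero] }
    (Isometry.of_dist_eq fun f g => rot_isometry α f g)

lemma rotE_apply (α : ι → ℝ) (f : EuclideanSpace ℝ (ι × Fin 2)) : rotE α f = rotF α f := rfl

lemma rot_ptZ (Q : ι → ℕ) (w : ι → ℝ) (z k : ι → ℤ) :
    rotF (fun b => 2*π*(k b)/(Q b)) (ptZ Q w z) = ptZ Q w (fun b => z b + k b) := by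
  ext p
  rcases p with ⟨b, t⟩
  have harg : 2*π*((z b : ℝ))/(Q b) + 2*π*((k b : ℝ))/(Q b)
      = 2*π*((z b : ℝ) + (k b : ℝ))/(Q b) := by ring
  fin_cases t
  · show Real.cos (2*π*(k b)/(Q b)) * ptZ Q w z (b, 0)
      - Real.sin (2*π*(k b)/(Q b)) * ptZ Q w z (b, 1) = _
    simp only [ptZ, PiLp.toLp_apply]
    norm_num
    rw [← harg, Real.cos_add]
    ring
  · show Real.sin (2*π*(k b)/(Q b)) * ptZ Q w z (b, 0)
      + Real.cos (2*π*(k b)/(Q b)) * ptZ Q w z (b, 1) = _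
    simp only [ptZ, PiLp.toLp_apply]
    norm_num
    rw [← harg, Real.sin_add]
    ring

lemma ptZ_period (Q : ι → ℕ) (w : ι → ℝ) (z z' : ι → ℤ)
    (h : ∀ b, ∃ m : ℤ, (z' b : ℝ) * (Q b : ℝ) ⁻¹ = (z b : ℝ) * (Q b : ℝ)⁻¹ + m) :
    ptZ Q w z' = ptZ Q w z := by
  ext p
  rcases p with ⟨b, t⟩
  obtain ⟨m, hm⟩ := h b
  have harg : 2*π*((z' b : ℝ))/(Q b) = 2*π*((z b : ℝ))/(Q b) + m * (2*π) := by
    have h2 : 2*π*((z' b : ℝ))/(Q b) = 2*π*((z' b : ℝ) * (Q b : ℝ)⁻¹) := by ring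
    rw [h2, hm]
    ring
  simp only [ptZ, PiLp.toLp_apply, harg, Real.cos_add_int_mul_two_pi, Real.sin_add_int_mul_two_pi]
end rot

section orbit
variable {ι : Type*} [Fintype ι]

noncomputable def torb (Q : ι → ℕ) (w : ι → ℝ) : Set (EuclideanSpace ℝ (ι × Fin 2)) :=
  Set.range (fun c : (∀ b, Fin (Q b)) => ptZ Q w (fun b => ((c b : ℕ) : ℤ)))

lemma torb_finite (Q : ι → ℕ) (w : ι → ℝ) : (torb Q w).Finite := Set.finite_range _

lemma ptZ_mem_torb {Q : ι → ℕ} (w : ι → ℝ) (hQ : ∀ b, 0 < Q b) (z : ι → ℤ) :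
    ptZ Q w z ∈ torb Q w := by
  have h0 : ∀ b, (0:ℤ) ≤ z b % (Q b) := fun b =>
    Int.emod_nonneg _ (by exact_mod_cast (hQ b).ne')
  have h1 : ∀ b, z b % (Q b) < (Q b) := fun b =>
    Int.emod_lt_of_pos _ (by exact_mod_cast hQ b)
  refine ⟨fun b => ⟨(z b % (Q b : ℤ)).toNat, by have := h0 b; have := h1 b; omega⟩, ?_⟩
  apply ptZ_period
  intro b
  refine ⟨-(z b / (Q b : ℤ)), ?_⟩
  have hQb : ((Q b : ℤ) : ℝ) ≠ 0 := by
    have := hQ b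
    simp only [Int.cast_natCast]
    positivity
  have hcast : ((((z b % (Q b : ℤ)).toNat : ℕ) : ℤ) : ℝ) = ((z b % (Q b : ℤ) : ℤ) : ℝ) := by
    rw [Int.toNat_of_nonneg (h0 b)]
  have hint := congrArg (fun t : ℤ => (t : ℝ)) (Int.emod_add_mul_ediv (z b) (Q b : ℤ))
  push_cast at hint hcast ⊢
  rw [hcast]
  have hQb' : ((Q b : ℕ) : ℝ) ≠ 0 := by exact_mod_cast hQb
  field_simp
  linarith [hint]

lemma torb_trans {Q : ι → ℕ} (w : ι → ℝ) (hQ : ∀ b, 0 < Q b) :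
    ∀ p ∈ torb Q w, ∀ q ∈ torb Q w,
    ∃ g : EuclideanSpace ℝ (ι × Fin 2) ≃ᵢ EuclideanSpace ℝ (ι × Fin 2),
      g '' torb Q w = torb Q w ∧ g p = q := by
  rintro p ⟨c, rfl⟩ q ⟨c', rfl⟩
  set Δ : ι → ℤ := fun b => ((c' b : ℕ) : ℤ) - ((c b : ℕ) : ℤ) with hΔ
  refine ⟨rotE (fun b => 2*π*(Δ b)/(Q b)), ?_, ?_⟩
  · apply Set.Subset.antisymm
    · rintro _ ⟨_, ⟨e, rfl⟩, rfl⟩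
      rw [rotE_apply, rot_ptZ]
      exact ptZ_mem_torb w hQ _
    · rintro _ ⟨e, rfl⟩
      refine ⟨ptZ Q w (fun b => ((e b : ℕ) : ℤ) - Δ b), ptZ_mem_torb w hQ _, ?_⟩
      rw [rotE_apply, rot_ptZ]
      congr 1
      funext b
      ring
  · rw [rotE_apply, rot_ptZ]
    congr 1
    funext b
    rw [hΔ]
    ring

lemma ptZ_dist {Q : ι → ℕ} {w : ι → ℝ} (hw : ∀ b, 0 ≤ w b) (z z' : ι → ℤ) :
    (dist (ptZ Q w z) (ptZ Q w z'))^2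
      = ∑ b, w b * (2 - 2*Real.cos (2*π*((z b : ℝ) - (z' b : ℝ))/(Q b))) := by
  rw [EuclideanSpace.dist_eq, Real.sq_sqrt (Finset.sum_nonneg fun p _ => sq_nonneg _)]
  rw [Fintype.sum_prod_type]
  refine Finset.sum_congr rfl fun b _ => ?_
  rw [Fin.sum_univ_two]
  simp only [ptZ, PiLp.toLp_apply, Real.dist_eq, sq_abs]
  norm_num
  set θ := 2*π*((z b : ℝ))/(Q b) with hθ
  set θ' := 2*π*((z' b : ℝ))/(Q b) with hθ'
  have harg : 2*π*((z b : ℝ) - (z' b : ℝ))/(Q b) = θ - θ' := by rw [hθ, hθ']; ring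
  rw [harg, Real.cos_sub]
  have hsq : Real.sqrt (w b)^2 = w b := Real.sq_sqrt (hw b)
  linear_combination ((Real.cos θ - Real.cos θ')^2 + (Real.sin θ - Real.sin θ')^2) * hsq
    + (w b) * (Real.sin_sq_add_cos_sq θ) + (w b) * (Real.sin_sq_add_cos_sq θ')
end orbit


lemma inner_sum_sum {m : ℕ} {F : Type*} [NormedAddCommGroup F] [InnerProductSpace ℝ F]
    (a : Fin m → ℝ) (w : Fin m → F) :
    (inner ℝ (∑ i, a i • w i) (∑ j, a j • w j) : ℝ) = ∑ i, ∑ j, a i * a j * inner ℝ (w i) (w j) := by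
  rw [sum_inner]
  refine Finset.sum_congr rfl fun i _ => ?_
  rw [inner_sum]
  refine Finset.sum_congr rfl fun j _ => ?_
  rw [real_inner_smul_left, real_inner_smul_right]
  ring

lemma polar3 {G : Type*} [NormedAddCommGroup G] [InnerProductSpace ℝ G] (a b c : G) :
    (inner ℝ (a - c) (b - c) : ℝ) = (dist a c ^ 2 + dist b c ^ 2 - dist a b ^ 2) / 2 := by
  rw [dist_eq_norm, dist_eq_norm, dist_eq_norm]
  have h := norm_sub_sq_real (a - c) (b - c)
  have h2 : (a - c) - (b - c) = a - b := by abel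
  rw [h2] at h
  linarith

lemma exists_isometry_extension {d : ℕ} {F : Type*} [NormedAddCommGroup F] [InnerProductSpace ℝ F]
    (x : Fin (d+1) → EuclideanSpace ℝ (Fin d)) (hx : AffineIndependent ℝ x)
    (y : Fin (d+1) → F) (hd : ∀ i j, dist (y i) (y j) = dist (x i) (x j)) :
    ∃ φ : EuclideanSpace ℝ (Fin d) → F, Isometry φ ∧ ∀ i, φ (x i) = y i := by
  by_cases hd0 : d = 0
  · subst hd0
    refine ⟨fun _ => y 0, ?_, ?_⟩
    · intro a b
      have hab : a = b := PiLp.ext fun i => i.elim0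
      subst hab
      simp
    · intro i
      have : i = 0 := by ext; omega
      rw [this]
  · haveI : Nonempty (Fin d) := ⟨⟨0, Nat.pos_of_ne_zero hd0⟩⟩
    set v : Fin d → EuclideanSpace ℝ (Fin d) := fun i => x i.succ - x 0 with hv
    have li0 := (affineIndependent_iff_linearIndependent_vsub ℝ x 0).mp hx
    have emb_inj : Function.Injective
        (fun i : Fin d => (⟨i.succ, Fin.succ_ne_zero i⟩ : {i : Fin (d+1) // i ≠ 0})) := by
      intro a b h
      exact Fin.succ_injective _ (congrArg Subtype.val h)
    have liv : LinearIndependent ℝ v := by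
      have := li0.comp _ emb_inj
      simpa [hv, Function.comp_def] using this
    have card_eq : Fintype.card (Fin d) = Module.finrank ℝ (EuclideanSpace ℝ (Fin d)) := by
      simp
    set B := basisOfLinearIndependentOfCardEqFinrank liv card_eq with hBdef
    have hB : ⇑B = v := coe_basisOfLinearIndependentOfCardEqFinrank liv card_eq
    set L := B.constr ℝ (fun i => y i.succ - y 0) with hL
    have hLB : ∀ i, L (v i) = y i.succ - y 0 := by
      intro i
      rw [← hB]
      exact B.constr_basis ℝ _ i
    have hinner : ∀ i j, (inner ℝ (v i) (v j) : ℝ)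
        = inner ℝ (y i.succ - y 0) (y j.succ - y 0) := by
      intro i j
      rw [polar3, polar3, hd, hd, hd]
    have hsq : ∀ u, (inner ℝ (L u) (L u) : ℝ) = inner ℝ u u := by
      intro u
      have hu : ∑ i, B.repr u i • B i = u := B.sum_repr u
      conv_lhs => rw [← hu]
      conv_rhs => rw [← hu]
      simp only [map_sum, map_smul]
      rw [inner_sum_sum, inner_sum_sum]
      refine Finset.sum_congr rfl fun i _ => Finset.sum_congr rfl fun j _ => ?_
      rw [hB, hLB, hLB, hinner]
    have hnorm : ∀ u, ‖L u‖ = ‖u‖ := by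
      intro u
      rw [@norm_eq_sqrt_re_inner ℝ, @norm_eq_sqrt_re_inner ℝ, hsq]
    refine ⟨fun z => y 0 + L (z - x 0), ?_, ?_⟩
    · apply Isometry.of_dist_eq
      intro a b
      rw [dist_eq_norm, dist_eq_norm]
      have h1 : (y 0 + L (a - x 0)) - (y 0 + L (b - x 0)) = L (a - x 0) - L (b - x 0) := by abel
      rw [h1, ← map_sub]
      have h2 : (a - x 0) - (b - x 0) = a - b := by abel
      rw [h2, hnorm]
    · intro i
      induction i using Fin.cases with
      | zero => simp
      | succ j =>
        show y 0 + L (x j.succ - x 0) = y j.succ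
        have hvj : x j.succ - x 0 = v j := rfl
        rw [hvj, hLB]
        abel


lemma realize_blocks {d : ℕ} (x : Fin (d+1) → EuclideanSpace ℝ (Fin d)) (hx : AffineIndependent ℝ x)
    {ι : Type*} [Fintype ι] (Q : ι → ℕ) (hQ : ∀ b, 0 < Q b) (a : ι → Fin (d+1) → ℤ)
    (w : ι → ℝ) (hw : ∀ b, 0 ≤ w b)
    (hsum : ∀ i j, (dist (x i) (x j))^2
      = ∑ b, w b * (2 - 2*Real.cos (2*π*((a b i : ℝ) - (a b j : ℝ))/(Q b)))) :
    ∃ (n : ℕ) (φ : EuclideanSpace ℝ (Fin d) → EuclideanSpace ℝ (Fin n))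
      (T : Set (EuclideanSpace ℝ (Fin n))),
      Isometry φ ∧ IsTransitiveSet T ∧ ∀ i, φ (x i) ∈ T := by
  classical
  set y : Fin (d+1) → EuclideanSpace ℝ (ι × Fin 2) :=
    fun i => ptZ Q w (fun b => a b i) with hy
  have hdist : ∀ i j, dist (y i) (y j) = dist (x i) (x j) := by
    intro i j
    have h1 : dist (y i) (y j)^2 = dist (x i) (x j)^2 := by
      rw [hy]
      rw [ptZ_dist hw]
      rw [hsum i j]
    have := congrArg Real.sqrt h1
    rwa [Real.sqrt_sq dist_nonneg, Real.sqrt_sq dist_nonneg] at this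
  obtain ⟨φ₀, hφ₀iso, hφ₀⟩ := exists_isometry_extension x hx y hdist
  set n := Fintype.card (ι × Fin 2) with hn
  set ψ : EuclideanSpace ℝ (ι × Fin 2) ≃ₗᵢ[ℝ] EuclideanSpace ℝ (Fin n) :=
    LinearIsometryEquiv.piLpCongrLeft 2 ℝ ℝ (Fintype.equivFin (ι × Fin 2)) with hψ
  refine ⟨n, fun z => ψ (φ₀ z), ψ '' torb Q w, ψ.isometry.comp hφ₀iso, ⟨?_, ?_⟩, ?_⟩
  · exact (torb_finite Q w).image _
  · rintro p hp q hq
    obtain ⟨p0, hp0, rfl⟩ := hp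
    obtain ⟨q0, hq0, rfl⟩ := hq
    obtain ⟨g, hgT, hgp⟩ := torb_trans w hQ p0 hp0 q0 hq0
    refine ⟨(ψ.toIsometryEquiv.symm.trans g).trans ψ.toIsometryEquiv, ?_, ?_⟩
    · have hcomp : ∀ z, ((ψ.toIsometryEquiv.symm.trans g).trans ψ.toIsometryEquiv) (ψ z)
          = ψ (g z) := by
        intro z
        simp [IsometryEquiv.trans_apply]
      calc ((ψ.toIsometryEquiv.symm.trans g).trans ψ.toIsometryEquiv) '' (ψ '' torb Q w)
          = (fun z => ((ψ.toIsometryEquiv.symm.trans g).trans ψ.toIsometryEquiv) (ψ z))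
              '' torb Q w := Set.image_image _ _ _
        _ = (fun z => ψ (g z)) '' torb Q w := by
            refine Set.image_congr fun z _ => hcomp z
        _ = ψ '' (g '' torb Q w) := (Set.image_image _ _ _).symm
        _ = ψ '' torb Q w := by rw [hgT]
    · calc ((ψ.toIsometryEquiv.symm.trans g).trans ψ.toIsometryEquiv) (ψ p0)
          = ψ (g p0) := by simp [IsometryEquiv.trans_apply]
        _ = ψ q0 := by rw [hgp]
  · intro i
    refine ⟨y i, ptZ_mem_torb w hQ _, ?_⟩
    show ψ (y i) = ψ (φ₀ (x i))
    rw [hφ₀ i]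

def c1 {N : ℕ} (k i j : Fin N) : ℝ :=
  ((if i = k then (1:ℝ) else 0) - (if j = k then 1 else 0))^2

def c2 {N : ℕ} (k l i j : Fin N) : ℝ :=
  ((if i = k ∨ i = l then (1:ℝ) else 0) - (if j = k ∨ j = l then 1 else 0))^2

lemma cut_pointwise {N : ℕ} {k l : Fin N} (hkl : k ≠ l) (i j : Fin N) :
    c1 k i j + c1 l i j - c2 k l i j
      = 2*((if i = k then (1:ℝ) else 0)*(if j = l then 1 else 0)
        + (if i = l then (1:ℝ) else 0)*(if j = k then 1 else 0)) := by
  by_cases h1 : i = k <;> by_cases h2 : i = l <;> by_cases h3 : j = k <;> by_cases h4 : j = l <;>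
    first
      | (exact absurd (h1 ▸ h2 ▸ rfl : k = l) hkl)
      | (exact absurd (h3 ▸ h4 ▸ rfl : k = l) hkl)
      | (simp [c1, c2, h1, h2, h3, h4, hkl, Ne.symm hkl]; try norm_num)

lemma cut_combo {N : ℕ} (E : Fin (N+1) → Fin (N+1) → ℝ)
    (hsym : ∀ i j, E i j = E j i) (hdiag : ∀ i, E i i = 0) (i j : Fin (N+1)) :
    ∑ k, ∑ l, (if k = l then (0:ℝ)
      else (E k l/4) * (c1 k i j + c1 l i j - c2 k l i j)) = E i j := by
  classical
  have hterm : ∀ k l : Fin (N+1), (if k = l then (0:ℝ)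
      else (E k l/4) * (c1 k i j + c1 l i j - c2 k l i j))
      = (if k = l then 0 else (E k l/2) * ((if i = k then (1:ℝ) else 0)*(if j = l then 1 else 0)))
        + (if k = l then 0 else (E k l/2) * ((if i = l then (1:ℝ) else 0)*(if j = k then 1 else 0))) := by
    intro k l
    by_cases hkl : k = l
    · simp [hkl]
    · simp only [hkl, if_false]
      rw [cut_pointwise hkl]
      ring
  simp_rw [hterm, Finset.sum_add_distrib]
  have hsum1 : ∑ k, ∑ l, (if k = l then (0:ℝ)
      else (E k l/2) * ((if i = k then (1:ℝ) else 0)*(if j = l then 1 else 0)))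
      = if i = j then 0 else E i j / 2 := by
    rw [Finset.sum_eq_single i]
    · rw [Finset.sum_eq_single j]
      · by_cases hij : i = j
        · simp [hij]
        · simp [hij, Ne.symm hij]
      · intro l _ hl
        simp [Ne.symm hl]
      · intro h; exact absurd (Finset.mem_univ _) h
    · intro k _ hk
      rw [Finset.sum_eq_zero]
      intro l _
      by_cases hkl : k = l <;> simp [hkl, Ne.symm hk]
    · intro h; exact absurd (Finset.mem_univ _) h
  have hsum2 : ∑ k, ∑ l, (if k = l then (0:ℝ)
      else (E k l/2) * ((if i = l then (1:ℝ) else 0)*(if j = k then 1 else 0)))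
      = if j = i then 0 else E j i / 2 := by
    rw [Finset.sum_eq_single j]
    · rw [Finset.sum_eq_single i]
      · by_cases hji : j = i
        · simp [hji]
        · simp [hji, Ne.symm hji]
      · intro l _ hl
        simp [Ne.symm hl]
      · intro h; exact absurd (Finset.mem_univ _) h
    · intro k _ hk
      rw [Finset.sum_eq_zero]
      intro l _
      by_cases hkl : k = l <;> simp [hkl, Ne.symm hk]
    · intro h; exact absurd (Finset.mem_univ _) h
  rw [hsum1, hsum2]
  by_cases hij : i = j
  · simp [hij, hdiag]
  · have hji : ¬ j = i := fun h => hij h.symm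
    rw [if_neg hij, if_neg hji, hsym j i]
    ring

lemma cut_block {N : ℕ} (s : Fin (N+1) → ℤ) (hs : ∀ m, s m = 0 ∨ s m = 1) (W : ℝ)
    (i j : Fin (N+1)) :
    (W/4) * (2 - 2*Real.cos (2*π*((s i : ℝ) - (s j : ℝ))/((2:ℕ):ℝ)))
      = W * ((s i : ℝ) - (s j : ℝ))^2 := by
  have hπ : Real.cos (-π) = -1 := by rw [Real.cos_neg, Real.cos_pi]
  have ht : (s i : ℝ) - (s j : ℝ) = 0 ∨ ((s i : ℝ) - (s j : ℝ) = 1 ∨ (s i : ℝ) - (s j : ℝ) = -1) := by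
    rcases hs i with h | h <;> rcases hs j with h' | h' <;> rw [h, h'] <;> norm_num
  rcases ht with h | h | h <;> rw [h]
  · rw [show 2*π*(0:ℝ)/((2:ℕ):ℝ) = 0 by norm_num, Real.cos_zero]; ring
  · rw [show 2*π*(1:ℝ)/((2:ℕ):ℝ) = π by push_cast; ring, Real.cos_pi]; ring
  · rw [show 2*π*(-1:ℝ)/((2:ℕ):ℝ) = -π by push_cast; ring, hπ]; ring

lemma sum_swap4 {N : ℕ} (f : Fin N → Fin N → Fin N → Fin N → ℝ) :
    ∑ i, ∑ j, ∑ k, ∑ l, f i j k l = ∑ k, ∑ l, ∑ i, ∑ j, f i j k l :=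
  calc ∑ i, ∑ j, ∑ k, ∑ l, f i j k l
      = ∑ i, ∑ k, ∑ j, ∑ l, f i j k l :=
        Finset.sum_congr rfl fun i _ => Finset.sum_comm
    _ = ∑ i, ∑ k, ∑ l, ∑ j, f i j k l :=
        Finset.sum_congr rfl fun i _ => Finset.sum_congr rfl fun k _ => Finset.sum_comm
    _ = ∑ k, ∑ i, ∑ l, ∑ j, f i j k l := Finset.sum_comm
    _ = ∑ k, ∑ l, ∑ i, ∑ j, f i j k l :=
        Finset.sum_congr rfl fun k _ => Finset.sum_comm

section qmatsec
variable {N : ℕ}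

lemma c1_symm (k i j : Fin (N+1)) : c1 k i j = c1 k j i := by unfold c1; ring

lemma c2_symm (k l i j : Fin (N+1)) : c2 k l i j = c2 k l j i := by unfold c2; ring

lemma c1_diag (k i : Fin (N+1)) : c1 k i i = 0 := by unfold c1; ring

lemma c2_diag (k l i : Fin (N+1)) : c2 k l i i = 0 := by unfold c2; ring

noncomputable def qmat {N : ℕ} : Fin (N+1) → Fin (N+1) → ℝ := fun i j =>
  ∑ k, ∑ l, if k = l then (0:ℝ) else (c1 k i j + c1 l i j + c2 k l i j)

lemma qmat_symm (i j : Fin (N+1)) : (qmat i j : ℝ) = qmat j i := by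
  unfold qmat
  refine Finset.sum_congr rfl fun k _ => Finset.sum_congr rfl fun l _ => ?_
  by_cases hkl : k = l
  · simp [hkl]
  · simp only [hkl, if_false, c1_symm, c2_symm]

lemma qmat_diag (i : Fin (N+1)) : (qmat i i : ℝ) = 0 := by
  unfold qmat
  refine Finset.sum_eq_zero fun k _ => Finset.sum_eq_zero fun l _ => ?_
  by_cases hkl : k = l
  · simp [hkl]
  · simp [hkl, c1_diag, c2_diag]

lemma ind_single_sum (k : Fin (N+1)) (c : Fin (N+1) → ℝ) :
    ∑ i, c i * (if i = k then (1:ℝ) else 0) = c k := by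
  rw [Finset.sum_eq_single k]
  · simp
  · intro b _ hb; simp [hb]
  · intro h; exact absurd (Finset.mem_univ _) h

lemma qform_c1 (k : Fin (N+1)) (c : Fin (N+1) → ℝ) (hc : ∑ i, c i = 0) :
    ∑ i, ∑ j, c i * c j * c1 k i j = -2 * (c k)^2 := by
  have h := qform_line (fun m => if m = k then (1:ℝ) else 0) c hc
  rw [ind_single_sum] at h
  simpa [c1] using h

lemma qform_c2 {k l : Fin (N+1)} (hkl : k ≠ l) (c : Fin (N+1) → ℝ) (hc : ∑ i, c i = 0) :
    ∑ i, ∑ j, c i * c j * c2 k l i j = -2 * (c k + c l)^2 := by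
  have h := qform_line (fun m => if m = k ∨ m = l then (1:ℝ) else 0) c hc
  have hii : ∀ i : Fin (N+1), (if i = k ∨ i = l then (1:ℝ) else 0)
      = (if i = k then (1:ℝ) else 0) + (if i = l then (1:ℝ) else 0) := by
    intro i
    by_cases h1 : i = k <;> by_cases h2 : i = l
    · exact absurd (h1 ▸ h2 ▸ rfl : k = l) hkl
    all_goals simp [h1, h2, hkl, Ne.symm hkl]
  have hval : ∑ i, c i * (if i = k ∨ i = l then (1:ℝ) else 0) = c k + c l := by
    simp_rw [hii, mul_add, Finset.sum_add_distrib, ind_single_sum]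
  rw [hval] at h
  simpa [c2] using h

lemma qmat_qform_ge (c : Fin (N+1) → ℝ) (hc : ∑ i, c i = 0) :
    -2 * (6*((N:ℝ)+1) * ∑ m, (c m)^2) ≤ ∑ i, ∑ j, c i * c j * qmat i j := by
  classical
  have h1 : ∑ i, ∑ j, c i * c j * qmat i j
      = ∑ k, ∑ l, ∑ i, ∑ j, (c i * c j
        * (if k = l then (0:ℝ) else (c1 k i j + c1 l i j + c2 k l i j))) := by
    rw [← sum_swap4]
    refine Finset.sum_congr rfl fun i _ => Finset.sum_congr rfl fun j _ => ?_
    unfold qmat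
    rw [Finset.mul_sum]
    refine Finset.sum_congr rfl fun k _ => ?_
    rw [Finset.mul_sum]
  have h2 : ∀ k l : Fin (N+1), ∑ i, ∑ j, (c i * c j
        * (if k = l then (0:ℝ) else (c1 k i j + c1 l i j + c2 k l i j)))
      = if k = l then 0 else (-2) * ((c k)^2 + (c l)^2 + (c k + c l)^2) := by
    intro k l
    by_cases hkl : k = l
    · simp [hkl]
    · simp only [hkl, if_false]
      have e : ∀ i j, c i * c j * (c1 k i j + c1 l i j + c2 k l i j)
          = c i * c j * c1 k i j + c i * c j * c1 l i j + c i * c j * c2 k l i j := by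
        intros; ring
      simp_rw [e, Finset.sum_add_distrib]
      rw [qform_c1 k c hc, qform_c1 l c hc, qform_c2 hkl c hc]
      ring
  rw [h1]
  simp_rw [h2]
  -- bound: each term ≥ -2*(3 c k² + 3 c l²)
  have hterm : ∀ k l : Fin (N+1), (-2) * (3*(c k)^2 + 3*(c l)^2)
      ≤ (if k = l then (0:ℝ) else (-2) * ((c k)^2 + (c l)^2 + (c k + c l)^2)) := by
    intro k l
    by_cases hkl : k = l
    · simp only [hkl, if_true]
      nlinarith [sq_nonneg (c l)]
    · simp only [hkl, if_false]
      nlinarith [sq_nonneg (c k - c l)]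
  calc -2 * (6*((N:ℝ)+1) * ∑ m, (c m)^2)
      = ∑ k : Fin (N+1), ∑ l : Fin (N+1), (-2) * (3*(c k)^2 + 3*(c l)^2) := by
        have : ∀ k : Fin (N+1), ∑ l : Fin (N+1), (-2) * (3*(c k)^2 + 3*(c l)^2)
            = -6*((N:ℝ)+1)*(c k)^2 - 6*∑ m, (c m)^2 := by
          intro k
          have e : ∀ l : Fin (N+1), (-2) * (3*(c k)^2 + 3*(c l)^2)
              = (-6)*(c k)^2 + (-6)*(c l)^2 := by intros; ring
          simp_rw [e, Finset.sum_add_distrib, Finset.sum_const, Finset.card_univ,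
            Fintype.card_fin, ← Finset.mul_sum]
          push_cast
          ring
        simp_rw [this, Finset.sum_sub_distrib, Finset.sum_const, Finset.card_univ,
          Fintype.card_fin, ← Finset.mul_sum]
        push_cast
        ring
    _ ≤ _ := Finset.sum_le_sum fun k _ => Finset.sum_le_sum fun l _ => hterm k l

lemma cut_sum_eval {N : ℕ} (E : Fin (N+1) → Fin (N+1) → ℝ)
    (hsym : ∀ i j, E i j = E j i) (hdiag : ∀ i, E i i = 0) (δ : ℝ) (i j : Fin (N+1)) :
    ∑ k, ∑ l, (if k = l then (0:ℝ)
      else ((δ + E k l/4) * c1 k i j + (δ + E k l/4) * c1 l i j + (δ - E k l/4) * c2 k l i j))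
    = δ * qmat i j + E i j := by
  classical
  have hterm : ∀ k l : Fin (N+1), (if k = l then (0:ℝ)
      else ((δ + E k l/4) * c1 k i j + (δ + E k l/4) * c1 l i j + (δ - E k l/4) * c2 k l i j))
      = (if k = l then (0:ℝ) else δ * (c1 k i j + c1 l i j + c2 k l i j))
        + (if k = l then (0:ℝ) else (E k l/4) * (c1 k i j + c1 l i j - c2 k l i j)) := by
    intro k l
    by_cases hkl : k = l
    · simp [hkl]
    · simp only [hkl, if_false]
      ring
  simp_rw [hterm, Finset.sum_add_distrib]
  rw [cut_combo E hsym hdiag i j]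
  congr 1
  unfold qmat
  rw [Finset.mul_sum]
  refine Finset.sum_congr rfl fun k _ => ?_
  rw [Finset.mul_sum]
  refine Finset.sum_congr rfl fun l _ => ?_
  by_cases hkl : k = l
  · simp [hkl]
  · simp [hkl]
end qmatsec

lemma cast_indX (P : Prop) [Decidable P] :
    (((if P then (1:ℤ) else 0) : ℤ) : ℝ) = if P then (1:ℝ) else 0 := by
  split <;> simp


/-- Every set of `d+1` affinely independent points of `ℝ^d` (a nondegenerate
simplex) is subtransitive: it embeds isometrically into a transitive finite
subset of some `ℝ^n`. -/
theorem stmt16 (d : ℕ) (x : Fin (d + 1) → EuclideanSpace ℝ (Fin d))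
    (hx : AffineIndependent ℝ x) :
    ∃ (n : ℕ) (φ : EuclideanSpace ℝ (Fin d) → EuclideanSpace ℝ (Fin n))
      (T : Set (EuclideanSpace ℝ (Fin n))),
      Isometry φ ∧ IsTransitiveSet T ∧ ∀ i, φ (x i) ∈ T := by
  classical
  obtain ⟨δ, hδ0, hδ⟩ := exists_delta x hx
  have hneg : ∀ c : Fin (d+1) → ℝ, (∑ i, c i) = 0 →
      ∑ i, ∑ j, c i * c j * (dist (x i) (x j)^2 - δ * qmat i j) ≤ 0 := by
    intro c hc
    have hsplit : ∑ i, ∑ j, c i * c j * (dist (x i) (x j)^2 - δ * qmat i j)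
        = (∑ i, ∑ j, c i * c j * (dist (x i) (x j))^2)
          - δ * (∑ i, ∑ j, c i * c j * qmat i j) := by
      have e : ∀ i j : Fin (d+1), c i * c j * (dist (x i) (x j)^2 - δ * qmat i j)
          = c i * c j * (dist (x i) (x j))^2 - δ * (c i * c j * qmat i j) := by intros; ring
      simp_rw [e, Finset.sum_sub_distrib, ← Finset.mul_sum]
    rw [hsplit, qform_points x c hc]
    have hq := qmat_qform_ge (N := d) c hc
    have hx2 := hδ c hc
    have hmul := mul_le_mul_of_nonneg_left hq hδ0.le
    nlinarith [hmul, hx2, sq_nonneg (‖∑ i, c i • x i‖)]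
  obtain ⟨u, hu⟩ := realize_negtype (fun i j => dist (x i) (x j)^2 - δ * qmat i j)
    (fun i j => by
      show dist (x i) (x j)^2 - δ * qmat i j = dist (x j) (x i)^2 - δ * qmat j i
      rw [dist_comm, qmat_symm])
    (fun i => by
      show dist (x i) (x i)^2 - δ * qmat i i = 0
      rw [dist_self, qmat_diag]; ring)
    hneg
  have hd1 : (0:ℝ) < δ/((d:ℝ)+1) := by positivity
  have happ := fun cx : Fin (d+1) => approx_line (fun i => u i cx) hd1
  choose Qg ag wg hQg hwg hbnd using happ
  set E : Fin (d+1) → Fin (d+1) → ℝ := fun k l =>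
    ∑ cx, ((u k cx - u l cx)^2
      - wg cx * (2 - 2*Real.cos (2*π*((ag cx k : ℝ) - (ag cx l : ℝ))/(Qg cx)))) with hE
  have hEsym : ∀ k l, E k l = E l k := by
    intro k l
    simp only [hE]
    refine Finset.sum_congr rfl fun cx _ => ?_
    have harg : 2*π*((ag cx l : ℝ) - (ag cx k : ℝ))/(Qg cx)
        = -(2*π*((ag cx k : ℝ) - (ag cx l : ℝ))/(Qg cx)) := by ring
    rw [harg, Real.cos_neg]
    ring
  have hEdiag : ∀ k, E k k = 0 := by
    intro k
    simp only [hE]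
    refine Finset.sum_eq_zero fun cx _ => ?_
    simp
  have hEb : ∀ k l, |E k l| ≤ δ := by
    intro k l
    simp only [hE]
    calc |∑ cx, ((u k cx - u l cx)^2
          - wg cx * (2 - 2*Real.cos (2*π*((ag cx k : ℝ) - (ag cx l : ℝ))/(Qg cx))))|
        ≤ ∑ cx, |((u k cx - u l cx)^2
          - wg cx * (2 - 2*Real.cos (2*π*((ag cx k : ℝ) - (ag cx l : ℝ))/(Qg cx))))| :=
          Finset.abs_sum_le_sum_abs _ _
      _ ≤ ∑ _cx : Fin (d+1), δ/((d:ℝ)+1) := Finset.sum_le_sum fun cx _ => by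
          rw [abs_sub_comm]; exact hbnd cx k l
      _ = δ := by
          rw [Finset.sum_const, Finset.card_univ, Fintype.card_fin, nsmul_eq_mul]
          push_cast
          field_simp
  set aR : ((Fin (d+1) × Fin (d+1)) × Fin 3) → Fin (d+1) → ℤ := fun s m =>
    if s.2 = 2 then (if m = s.1.1 ∨ m = s.1.2 then 1 else 0)
    else if s.2 = 0 then (if m = s.1.1 then 1 else 0)
    else (if m = s.1.2 then 1 else 0) with haR
  set wR : ((Fin (d+1) × Fin (d+1)) × Fin 3) → ℝ := fun s =>
    if s.1.1 = s.1.2 then (0:ℝ) else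
      (if s.2 = 2 then (δ - E s.1.1 s.1.2/4) else (δ + E s.1.1 s.1.2/4))/4 with hwR
  have hsum : ∀ i j, (dist (x i) (x j))^2
      = ∑ b : (Fin (d+1)) ⊕ ((Fin (d+1) × Fin (d+1)) × Fin 3),
        (Sum.elim wg wR) b
        * (2 - 2*Real.cos (2*π*(((Sum.elim ag aR) b i : ℝ) - ((Sum.elim ag aR) b j : ℝ))
            /((Sum.elim Qg (fun _ => 2) : _ → ℕ) b))) := by
    intro i j
    rw [Fintype.sum_sum_type]
    simp only [Sum.elim_inl, Sum.elim_inr]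
    have hL : ∑ cx : Fin (d+1),
        wg cx * (2 - 2*Real.cos (2*π*((ag cx i : ℝ) - (ag cx j : ℝ))/(Qg cx)))
        = (dist (x i) (x j)^2 - δ * qmat i j) - E i j := by
      have h1 : E i j = (∑ cx, (u i cx - u j cx)^2)
          - ∑ cx, wg cx * (2 - 2*Real.cos (2*π*((ag cx i : ℝ) - (ag cx j : ℝ))/(Qg cx))) := by
        simp only [hE]
        rw [Finset.sum_sub_distrib]
      have h2 := hu i j
      linarith [h1, h2]
    have hR : ∑ s : (Fin (d+1) × Fin (d+1)) × Fin 3,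
        wR s * (2 - 2*Real.cos (2*π*((aR s i : ℝ) - (aR s j : ℝ))/((2:ℕ):ℝ)))
        = δ * qmat i j + E i j := by
      rw [Fintype.sum_prod_type]
      have hprod : ∀ p : Fin (d+1) × Fin (d+1),
          (∑ r : Fin 3,
            wR (p, r) * (2 - 2*Real.cos (2*π*((aR (p, r) i : ℝ) - (aR (p, r) j : ℝ))/((2:ℕ):ℝ))))
          = if p.1 = p.2 then (0:ℝ) else
              ((δ + E p.1 p.2/4) * c1 p.1 i j + (δ + E p.1 p.2/4) * c1 p.2 i j
                + (δ - E p.1 p.2/4) * c2 p.1 p.2 i j) := by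
        intro p
        by_cases hp : p.1 = p.2
        · simp [hwR, hp]
        · rw [Fin.sum_univ_three]
          simp only [haR, hwR, hp, if_false, reduceIte,
            (by decide : ¬((0 : Fin 3) = 2)), (by decide : ¬((1 : Fin 3) = 2)),
            (by decide : ¬((1 : Fin 3) = 0))]
          rw [cut_block (fun m => if m = p.1 then (1:ℤ) else 0)
              (fun m => by by_cases h : m = p.1 <;> simp [h]) (δ + E p.1 p.2/4) i j,
            cut_block (fun m => if m = p.2 then (1:ℤ) else 0)
              (fun m => by by_cases h : m = p.2 <;> simp [h]) (δ + E p.1 p.2/4) i j,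
            cut_block (fun m => if m = p.1 ∨ m = p.2 then (1:ℤ) else 0)
              (fun m => by by_cases h : m = p.1 ∨ m = p.2 <;> simp [h]) (δ - E p.1 p.2/4) i j]
          simp only [cast_indX]
          unfold c1 c2
          ring
      simp_rw [hprod]
      rw [Fintype.sum_prod_type]
      exact cut_sum_eval E hEsym hEdiag δ i j
    rw [hL, hR]
    ring
  exact realize_blocks x hx (ι := (Fin (d+1)) ⊕ ((Fin (d+1) × Fin (d+1)) × Fin 3))
    (Sum.elim Qg (fun _ => 2))
    (by
      rintro (cx | s)
      · exact hQg cx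
      · simp)
    (Sum.elim ag aR)
    (Sum.elim wg wR)
    (by
      rintro (cx | s)
      · exact hwg cx
      · simp only [Sum.elim_inr, hwR]
        by_cases hs : s.1.1 = s.1.2
        · simp [hs]
        · have h1 := abs_le.mp (hEb s.1.1 s.1.2)
          simp only [hs, if_false]
          by_cases hr : s.2 = 2 <;>
            simp only [hr, if_true, if_false] <;>
            [linarith [h1.2]; linarith [h1.1]])
    hsum
end
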